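/- Assume the positivity condition: l_j − L_j(τ) > 0 for every τ ∈ ℝ^ℓ and every j. Then for every H ∈ ℝ^ℓ and every β > 0: ∫_{ℝ^ℓ} e^{−β ⟨H, J(τ)⟩} · det( ∂J_j/∂τ_i )(τ) dτ = ∫_Δ e^{−β ⟨H, x⟩} dx, where the right-hand side is the Lebesgue integral over the moment polytope Δ := { x ∈ ℝ^ℓ : 0 ≤ x_j ≤ l_j − Σ_{i<j} c_{ji} x_i for all j }. -/

import Mathlib

open Real Finset

noncomputable section

/-- `K(t) = log(1 + e^{2t})`. -/
def Kfun (t : ℝ) : ℝ := Real.log (1 + Real.exp (2 * t))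

/-- `𝒥(t) = e^{2t}/(1 + e^{2t})`. -/
def Jfun (t : ℝ) : ℝ := Real.exp (2 * t) / (1 + Real.exp (2 * t))

/-- The coordinate change `Φ(σ)_i = σ_i + (1/2)·Σ_{j>i} c_{ji} K(σ_j)`. -/
def Phi {ℓ : ℕ} (c : Fin ℓ → Fin ℓ → ℤ) (σ : Fin ℓ → ℝ) : Fin ℓ → ℝ :=
  fun i => σ i + (1 / 2) * ∑ j ∈ Finset.univ.filter (fun j => i < j), (c j i : ℝ) * Kfun (σ j)

/-- The inverse of the coordinate change `Φ`. -/
def PhiInv {ℓ : ℕ} (c : Fin ℓ → Fin ℓ → ℤ) : (Fin ℓ → ℝ) → (Fin ℓ → ℝ) :=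
  Function.invFun (Phi c)

/-- The Kähler potential `K_λ(τ) = Σ_i l_i K(τ̃_i)`, where `τ̃ = Φ⁻¹(τ)`. -/
def Klam {ℓ : ℕ} (l : Fin ℓ → ℤ) (c : Fin ℓ → Fin ℓ → ℤ) (τ : Fin ℓ → ℝ) : ℝ :=
  ∑ i, (l i : ℝ) * Kfun (PhiInv c τ i)

/-- The action variables `J_j(τ) = (1/2)·∂K_λ/∂τ_j`. -/
def Jact {ℓ : ℕ} (l : Fin ℓ → ℤ) (c : Fin ℓ → Fin ℓ → ℤ) (j : Fin ℓ) (τ : Fin ℓ → ℝ) : ℝ :=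
  (1 / 2) * fderiv ℝ (Klam l c) τ (Pi.single j 1)

/-- `L_j(τ) = Σ_{i<j} c_{ji} J_i(τ)`. -/
def Lfun {ℓ : ℕ} (l : Fin ℓ → ℤ) (c : Fin ℓ → Fin ℓ → ℤ) (j : Fin ℓ) (τ : Fin ℓ → ℝ) : ℝ :=
  ∑ i ∈ Finset.univ.filter (fun i => i < j), (c j i : ℝ) * Jact l c i τ

lemma one_add_exp_pos (t : ℝ) : (0:ℝ) < 1 + Real.exp (2*t) := by positivity

lemma Jfun_pos (t : ℝ) : 0 < Jfun t := by
  unfold Jfun; positivity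

lemma Jfun_lt_one (t : ℝ) : Jfun t < 1 := by
  unfold Jfun
  rw [div_lt_one (one_add_exp_pos t)]
  linarith

lemma Jfun_injective : Function.Injective Jfun := by
  intro a b h
  unfold Jfun at h
  have ha := one_add_exp_pos a
  have hb := one_add_exp_pos b
  have : Real.exp (2*a) = Real.exp (2*b) := by
    field_simp at h
    nlinarith [h]
  have := Real.exp_injective this
  linarith

lemma hasDerivAt_Kfun (t : ℝ) : HasDerivAt Kfun (2 * Jfun t) t := by
  have he : HasDerivAt (fun t : ℝ => Real.exp (2*t)) (2 * Real.exp (2*t)) t := by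
    simpa [mul_comm] using ((hasDerivAt_id t).const_mul 2).exp
  have := (Real.hasDerivAt_log (ne_of_gt (one_add_exp_pos t))).comp t (he.const_add 1)
  refine this.congr_deriv ?_
  unfold Jfun
  field_simp

lemma hasDerivAt_Jfun (t : ℝ) : HasDerivAt Jfun (2 * Jfun t * (1 - Jfun t)) t := by
  have he : HasDerivAt (fun t : ℝ => Real.exp (2*t)) (2 * Real.exp (2*t)) t := by
    simpa [mul_comm] using ((hasDerivAt_id t).const_mul 2).exp
  have h1 : HasDerivAt (fun t : ℝ => 1 + Real.exp (2*t)) (2 * Real.exp (2*t)) t :=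
    he.const_add 1
  have := he.div h1 (ne_of_gt (one_add_exp_pos t))
  refine this.congr_deriv ?_
  unfold Jfun
  have := one_add_exp_pos t
  field_simp

lemma differentiable_Kfun : Differentiable ℝ Kfun := fun t => (hasDerivAt_Kfun t).differentiableAt

def Psi {ℓ : ℕ} (c : Fin ℓ → Fin ℓ → ℤ) (τ : Fin ℓ → ℝ) (i : Fin ℓ) : ℝ :=
  τ i - (1 / 2) * ∑ j ∈ (Finset.univ.filter (fun j => i < j)).attach,
    (c j.1 i : ℝ) * Kfun (Psi c τ j.1)
termination_by ℓ - i.1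
decreasing_by
  have hj := j.2
  simp only [Finset.mem_filter] at hj
  exact Nat.sub_lt_sub_left i.2 hj.2

lemma Psi_spec {ℓ : ℕ} (c : Fin ℓ → Fin ℓ → ℤ) (τ : Fin ℓ → ℝ) (i : Fin ℓ) :
    Psi c τ i = τ i - (1 / 2) * ∑ j ∈ Finset.univ.filter (fun j => i < j),
      (c j i : ℝ) * Kfun (Psi c τ j) := by
  rw [Psi]
  congr 2
  exact Finset.sum_attach _ (fun j => (c j i : ℝ) * Kfun (Psi c τ j))

lemma Phi_Psi {ℓ : ℕ} (c : Fin ℓ → Fin ℓ → ℤ) (τ : Fin ℓ → ℝ) : Phi c (Psi c τ) = τ := by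
  funext i
  unfold Phi
  rw [Psi_spec]
  ring

lemma Psi_Phi {ℓ : ℕ} (c : Fin ℓ → Fin ℓ → ℤ) (σ : Fin ℓ → ℝ) : Psi c (Phi c σ) = σ := by
  funext i
  suffices h : ∀ n : ℕ, ∀ i : Fin ℓ, ℓ - i.1 ≤ n → Psi c (Phi c σ) i = σ i from
    h ℓ i (Nat.sub_le _ _)
  intro n
  induction n with
  | zero => intro i hi; omega
  | succ n ih =>
    intro i hi
    rw [Psi_spec]
    have hsum : ∀ j ∈ Finset.univ.filter (fun j => i < j),
        (c j i : ℝ) * Kfun (Psi c (Phi c σ) j) = (c j i : ℝ) * Kfun (σ j) := by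
      intro j hj
      simp only [Finset.mem_filter] at hj
      rw [ih j (by omega)]
    rw [Finset.sum_congr rfl hsum]
    show Phi c σ i - _ = σ i
    unfold Phi
    ring

lemma Phi_injective {ℓ : ℕ} (c : Fin ℓ → Fin ℓ → ℤ) : Function.Injective (Phi c) :=
  Function.LeftInverse.injective (g := Psi c) (Psi_Phi c)

lemma PhiInv_eq_Psi {ℓ : ℕ} (c : Fin ℓ → Fin ℓ → ℤ) : PhiInv c = Psi c := by
  funext τ
  have : PhiInv c (Phi c (Psi c τ)) = Psi c τ :=
    Function.leftInverse_invFun (Phi_injective c) (Psi c τ)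
  rwa [Phi_Psi] at this

open ContinuousLinearMap in
def PhiDeriv {ℓ : ℕ} (c : Fin ℓ → Fin ℓ → ℤ) (σ : Fin ℓ → ℝ) :
    (Fin ℓ → ℝ) →L[ℝ] (Fin ℓ → ℝ) :=
  ContinuousLinearMap.pi fun i =>
    proj i + (1/2 : ℝ) • ∑ j ∈ Finset.univ.filter (fun j => i < j),
      (c j i : ℝ) • ((2 * Jfun (σ j)) • proj j)

lemma PhiDeriv_apply {ℓ : ℕ} (c : Fin ℓ → Fin ℓ → ℤ) (σ : Fin ℓ → ℝ) (v : Fin ℓ → ℝ)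
    (i : Fin ℓ) : PhiDeriv c σ v i = v i + ∑ j ∈ Finset.univ.filter (fun j => i < j),
      (c j i : ℝ) * Jfun (σ j) * v j := by
  simp only [PhiDeriv, ContinuousLinearMap.pi_apply, ContinuousLinearMap.add_apply,
    ContinuousLinearMap.smul_apply, ContinuousLinearMap.sum_apply, ContinuousLinearMap.proj_apply,
    smul_eq_mul, Finset.mul_sum]
  congr 1
  apply Finset.sum_congr rfl
  intro j _
  ring

open ContinuousLinearMap in
lemma hasFDerivAt_Phi {ℓ : ℕ} (c : Fin ℓ → Fin ℓ → ℤ) (σ : Fin ℓ → ℝ) :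
    HasFDerivAt (Phi c) (PhiDeriv c σ) σ := by
  rw [PhiDeriv, hasFDerivAt_pi]
  intro i
  have h1 : HasFDerivAt (fun σ : Fin ℓ → ℝ => σ i) (proj i : (Fin ℓ → ℝ) →L[ℝ] ℝ) σ :=
    hasFDerivAt_apply i σ
  have h2 : HasFDerivAt
      (fun σ : Fin ℓ → ℝ => ∑ j ∈ Finset.univ.filter (fun j => i < j), (c j i : ℝ) * Kfun (σ j))
      (∑ j ∈ Finset.univ.filter (fun j => i < j), (c j i : ℝ) • ((2 * Jfun (σ j)) • (proj j : (Fin ℓ → ℝ) →L[ℝ] ℝ))) σ := by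
    apply HasFDerivAt.fun_sum
    intro j _
    exact (((hasDerivAt_Kfun (σ j)).comp_hasFDerivAt (f := fun σ : Fin ℓ → ℝ => σ j) σ (hasFDerivAt_apply j σ)).const_mul _)
  have h3 := HasFDerivAt.const_mul h2 (1/2 : ℝ)
  exact h1.add h3

lemma PhiDeriv_matrix {ℓ : ℕ} (c : Fin ℓ → Fin ℓ → ℤ) (σ : Fin ℓ → ℝ) (i k : Fin ℓ) :
    LinearMap.toMatrix' ((PhiDeriv c σ) : (Fin ℓ → ℝ) →ₗ[ℝ] (Fin ℓ → ℝ)) i k =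
      (if i = k then 1 else 0) + (if i < k then (c k i : ℝ) * Jfun (σ k) else 0) := by
  rw [LinearMap.toMatrix'_apply]
  show PhiDeriv c σ (Pi.single k 1) i = _
  rw [PhiDeriv_apply]
  have hsum : ∑ j ∈ Finset.univ.filter (fun j => i < j),
      (c j i : ℝ) * Jfun (σ j) * (if j = k then 1 else 0)
      = (if i < k then (c k i : ℝ) * Jfun (σ k) else 0) := by
    rw [Finset.sum_congr rfl (fun j _ => by rw [mul_ite, mul_one, mul_zero])]
    rw [Finset.sum_ite_eq' (Finset.univ.filter (fun j => i < j)) k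
      (fun j => (c j i : ℝ) * Jfun (σ j))]
    simp
  simp only [Pi.single_apply]
  rw [hsum]

lemma PhiDeriv_det {ℓ : ℕ} (c : Fin ℓ → Fin ℓ → ℤ) (σ : Fin ℓ → ℝ) :
    (PhiDeriv c σ).det = 1 := by
  have h : (PhiDeriv c σ).det
      = LinearMap.det ((PhiDeriv c σ) : (Fin ℓ → ℝ) →ₗ[ℝ] (Fin ℓ → ℝ)) := rfl
  rw [h, ← LinearMap.det_toMatrix']
  have htri : (LinearMap.toMatrix' ((PhiDeriv c σ) : (Fin ℓ → ℝ) →ₗ[ℝ] (Fin ℓ → ℝ))).BlockTriangular id := by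
    intro i k hki
    rw [PhiDeriv_matrix]
    simp only [id] at hki
    rw [if_neg (by omega), if_neg (by omega)]
    norm_num
  rw [Matrix.det_of_upperTriangular htri]
  apply Finset.prod_eq_one
  intro i _
  rw [PhiDeriv_matrix, if_pos rfl, if_neg (lt_irrefl i)]
  norm_num

lemma differentiable_Psi {ℓ : ℕ} (c : Fin ℓ → Fin ℓ → ℤ) (i : Fin ℓ) :
    Differentiable ℝ (fun τ => Psi c τ i) := by
  suffices h : ∀ n : ℕ, ∀ i : Fin ℓ, ℓ - i.1 ≤ n → Differentiable ℝ (fun τ => Psi c τ i) from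
    h ℓ i (Nat.sub_le _ _)
  intro n
  induction n with
  | zero => intro i hi; exact absurd hi (by omega)
  | succ n ih =>
    intro i hi
    have : (fun τ => Psi c τ i) = fun τ : Fin ℓ → ℝ => τ i - (1 / 2) *
        ∑ j ∈ Finset.univ.filter (fun j => i < j), (c j i : ℝ) * Kfun (Psi c τ j) := by
      funext τ; exact Psi_spec c τ i
    rw [this]
    apply Differentiable.sub (fun τ => (hasFDerivAt_apply i τ).differentiableAt)
    apply Differentiable.const_mul
    apply Differentiable.fun_sum
    intro j hj
    simp only [Finset.mem_filter] at hj
    exact ((differentiable_Kfun.comp (ih j (by omega))).const_mul _)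

lemma Klam_eq {ℓ : ℕ} (l : Fin ℓ → ℤ) (c : Fin ℓ → Fin ℓ → ℤ) :
    Klam l c = fun τ => ∑ i, (l i : ℝ) * Kfun (Psi c τ i) := by
  funext τ; simp [Klam, PhiInv_eq_Psi]

lemma differentiable_Klam {ℓ : ℕ} (l : Fin ℓ → ℤ) (c : Fin ℓ → Fin ℓ → ℤ) :
    Differentiable ℝ (Klam l c) := by
  rw [Klam_eq]
  apply Differentiable.fun_sum
  intro i _
  exact (differentiable_Kfun.comp (differentiable_Psi c i)).const_mul _

open ContinuousLinearMap in
lemma hasFDerivAt_sumK {ℓ : ℕ} (l : Fin ℓ → ℤ) (σ : Fin ℓ → ℝ) :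
    HasFDerivAt (fun σ : Fin ℓ → ℝ => ∑ m, (l m : ℝ) * Kfun (σ m))
      (∑ m, (l m : ℝ) • ((2 * Jfun (σ m)) • (proj m : (Fin ℓ → ℝ) →L[ℝ] ℝ))) σ := by
  apply HasFDerivAt.fun_sum
  intro m _
  exact ((hasDerivAt_Kfun (σ m)).comp_hasFDerivAt (f := fun σ : Fin ℓ → ℝ => σ m) σ (hasFDerivAt_apply m σ)).const_mul _

lemma Jact_Phi {ℓ : ℕ} (l : Fin ℓ → ℤ) (c : Fin ℓ → Fin ℓ → ℤ) (σ : Fin ℓ → ℝ) (i : Fin ℓ) :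
    Jact l c i (Phi c σ) = ((l i : ℝ) - Lfun l c i (Phi c σ)) * Jfun (σ i) := by
  classical
  set T := fderiv ℝ (Klam l c) (Phi c σ) with hT
  have hK : HasFDerivAt (Klam l c) T (Phi c σ) :=
    (differentiable_Klam l c (Phi c σ)).hasFDerivAt
  have hC : HasFDerivAt (fun σ => Klam l c (Phi c σ)) (T.comp (PhiDeriv c σ)) σ :=
    hK.comp σ (hasFDerivAt_Phi c σ)
  have hfun : (fun σ => Klam l c (Phi c σ)) = fun σ : Fin ℓ → ℝ => ∑ m, (l m : ℝ) * Kfun (σ m) := by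
    funext σ'
    rw [Klam_eq]
    simp [Psi_Phi]
  rw [hfun] at hC
  have huniq := hC.unique (hasFDerivAt_sumK l σ)
  -- apply both sides to `Pi.single i 1`
  have happ := congrArg (fun (S : (Fin ℓ → ℝ) →L[ℝ] ℝ) => S (Pi.single i 1)) huniq
  simp only [ContinuousLinearMap.comp_apply] at happ
  -- decompose the vector
  have hvec : PhiDeriv c σ (Pi.single i 1) = (Pi.single i 1 : Fin ℓ → ℝ) +
      Jfun (σ i) • (∑ k ∈ Finset.univ.filter (fun k => k < i),
        (c i k : ℝ) • (Pi.single k 1 : Fin ℓ → ℝ)) := by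
    funext k
    rw [PhiDeriv_apply]
    have h1 : ∑ j ∈ Finset.univ.filter (fun j => k < j),
        (c j k : ℝ) * Jfun (σ j) * (Pi.single i 1 : Fin ℓ → ℝ) j
        = if k < i then (c i k : ℝ) * Jfun (σ i) else 0 := by
      rw [Finset.sum_congr rfl (fun j _ => by
        rw [Pi.single_apply, mul_ite, mul_one, mul_zero])]
      rw [Finset.sum_ite_eq' (Finset.univ.filter (fun j => k < j)) i
        (fun j => (c j k : ℝ) * Jfun (σ j))]
      simp
    rw [h1]
    have h2 : (∑ m ∈ Finset.univ.filter (fun m => m < i),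
        (c i m : ℝ) • (Pi.single m 1 : Fin ℓ → ℝ)) k = if k < i then (c i k : ℝ) else 0 := by
      rw [Finset.sum_apply]
      rw [Finset.sum_congr rfl (fun m _ => by
        rw [Pi.smul_apply, Pi.single_apply, smul_eq_mul, mul_ite, mul_one, mul_zero])]
      rw [Finset.sum_ite_eq (Finset.univ.filter (fun m => m < i)) k (fun m => (c i m : ℝ))]
      simp
    rw [Pi.add_apply, Pi.smul_apply, h2, smul_eq_mul]
    by_cases hk : k < i
    · rw [if_pos hk, if_pos hk]; ring
    · rw [if_neg hk, if_neg hk, mul_zero]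
  rw [hvec] at happ
  rw [map_add, map_smul, map_sum] at happ
  have hTsingle : ∀ m : Fin ℓ, T (Pi.single m 1) = 2 * Jact l c m (Phi c σ) := by
    intro m
    rw [Jact, ← hT]
    ring
  rw [hTsingle i] at happ
  rw [Finset.sum_congr rfl (fun k _ => by rw [map_smul, hTsingle k])] at happ
  -- compute RHS of happ
  have hR : (∑ m, (l m : ℝ) • ((2 * Jfun (σ m)) •
      ((ContinuousLinearMap.proj m) : (Fin ℓ → ℝ) →L[ℝ] ℝ))) (Pi.single i 1)
      = 2 * (l i : ℝ) * Jfun (σ i) := by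
    rw [ContinuousLinearMap.sum_apply]
    rw [Finset.sum_congr rfl (fun m _ => by
      rw [ContinuousLinearMap.smul_apply, ContinuousLinearMap.smul_apply,
        ContinuousLinearMap.proj_apply, Pi.single_apply, smul_eq_mul, smul_eq_mul])]
    rw [Finset.sum_congr rfl (fun m _ => by rw [mul_ite, mul_ite, mul_one, mul_zero, mul_zero])]
    rw [Finset.sum_ite_eq' Finset.univ i (fun m => (l m : ℝ) * (2 * Jfun (σ m)))]
    simp only [Finset.mem_univ, if_pos]
    ring
  rw [hR] at happ
  -- now happ : 2 * Jact i + Jfun (σ i) • ∑ c i k • (2 * Jact k) = 2 * l i * Jfun σ i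
  simp only [smul_eq_mul] at happ
  have hL : Lfun l c i (Phi c σ)
      = ∑ k ∈ Finset.univ.filter (fun k => k < i), (c i k : ℝ) * Jact l c k (Phi c σ) := rfl
  have hsum : ∑ k ∈ Finset.univ.filter (fun k => k < i),
      (c i k : ℝ) * (2 * Jact l c k (Phi c σ))
      = 2 * Lfun l c i (Phi c σ) := by
    rw [hL, Finset.mul_sum]
    exact Finset.sum_congr rfl (fun k _ => by ring)
  rw [hsum] at happ
  linarith [happ]

def Gfun {ℓ : ℕ} (l : Fin ℓ → ℤ) (c : Fin ℓ → Fin ℓ → ℤ) (σ : Fin ℓ → ℝ) (i : Fin ℓ) : ℝ :=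
  ((l i : ℝ) - ∑ j ∈ (Finset.univ.filter (fun j => j < i)).attach,
    (c i j.1 : ℝ) * Gfun l c σ j.1) * Jfun (σ i)
termination_by i.1
decreasing_by
  have hj := j.2
  simp only [Finset.mem_filter] at hj
  exact hj.2

lemma Gfun_spec {ℓ : ℕ} (l : Fin ℓ → ℤ) (c : Fin ℓ → Fin ℓ → ℤ) (σ : Fin ℓ → ℝ) (i : Fin ℓ) :
    Gfun l c σ i = ((l i : ℝ) - ∑ j ∈ Finset.univ.filter (fun j => j < i),
      (c i j : ℝ) * Gfun l c σ j) * Jfun (σ i) := by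
  rw [Gfun]
  congr 2
  exact Finset.sum_attach _ (fun j => (c i j : ℝ) * Gfun l c σ j)

lemma Jact_Phi_eq_Gfun {ℓ : ℕ} (l : Fin ℓ → ℤ) (c : Fin ℓ → Fin ℓ → ℤ) (σ : Fin ℓ → ℝ)
    (i : Fin ℓ) : Jact l c i (Phi c σ) = Gfun l c σ i := by
  suffices h : ∀ n : ℕ, ∀ i : Fin ℓ, i.1 < n → Jact l c i (Phi c σ) = Gfun l c σ i from
    h ℓ i i.2
  intro n
  induction n with
  | zero => intro i hi; omega
  | succ n ih =>
    intro i hi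
    rw [Jact_Phi, Gfun_spec]
    congr 2
    unfold Lfun
    apply Finset.sum_congr rfl
    intro j hj
    simp only [Finset.mem_filter] at hj
    rw [ih j (by omega)]

lemma Jact_eq_Gfun_Psi {ℓ : ℕ} (l : Fin ℓ → ℤ) (c : Fin ℓ → Fin ℓ → ℤ) (τ : Fin ℓ → ℝ)
    (i : Fin ℓ) : Jact l c i τ = Gfun l c (Psi c τ) i := by
  conv_lhs => rw [← Phi_Psi c τ]
  exact Jact_Phi_eq_Gfun l c (Psi c τ) i

lemma Lfun_Phi_eq {ℓ : ℕ} (l : Fin ℓ → ℤ) (c : Fin ℓ → Fin ℓ → ℤ) (σ : Fin ℓ → ℝ) (i : Fin ℓ) :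
    Lfun l c i (Phi c σ) = ∑ j ∈ Finset.univ.filter (fun j => j < i),
      (c i j : ℝ) * Gfun l c σ j := by
  unfold Lfun
  exact Finset.sum_congr rfl (fun j _ => by rw [Jact_Phi_eq_Gfun])

open ContinuousLinearMap in
lemma hasFDerivAt_Jfun_eval {ℓ : ℕ} (i : Fin ℓ) (σ : Fin ℓ → ℝ) :
    HasFDerivAt (fun σ : Fin ℓ → ℝ => Jfun (σ i))
      ((2 * Jfun (σ i) * (1 - Jfun (σ i))) • (proj i : (Fin ℓ → ℝ) →L[ℝ] ℝ)) σ :=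
  (hasDerivAt_Jfun (σ i)).comp_hasFDerivAt (f := fun σ : Fin ℓ → ℝ => σ i) σ (hasFDerivAt_apply i σ)

lemma Gfun_fderiv {ℓ : ℕ} (l : Fin ℓ → ℤ) (c : Fin ℓ → Fin ℓ → ℤ) (i : Fin ℓ) :
    Differentiable ℝ (fun σ => Gfun l c σ i) ∧
    (∀ σ : Fin ℓ → ℝ, ∀ k : Fin ℓ, i < k →
      fderiv ℝ (fun σ => Gfun l c σ i) σ (Pi.single k 1) = 0) ∧
    (∀ σ : Fin ℓ → ℝ, fderiv ℝ (fun σ => Gfun l c σ i) σ (Pi.single i 1) =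
      ((l i : ℝ) - ∑ j ∈ Finset.univ.filter (fun j => j < i), (c i j : ℝ) * Gfun l c σ j) *
        (2 * Jfun (σ i) * (1 - Jfun (σ i)))) := by
  suffices h : ∀ n : ℕ, ∀ i : Fin ℓ, i.1 < n →
      Differentiable ℝ (fun σ => Gfun l c σ i) ∧
      (∀ σ : Fin ℓ → ℝ, ∀ k : Fin ℓ, i < k →
        fderiv ℝ (fun σ => Gfun l c σ i) σ (Pi.single k 1) = 0) ∧
      (∀ σ : Fin ℓ → ℝ, fderiv ℝ (fun σ => Gfun l c σ i) σ (Pi.single i 1) =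
        ((l i : ℝ) - ∑ j ∈ Finset.univ.filter (fun j => j < i), (c i j : ℝ) * Gfun l c σ j) *
          (2 * Jfun (σ i) * (1 - Jfun (σ i)))) from h ℓ i i.2
  intro n
  induction n with
  | zero => intro i hi; omega
  | succ n ih =>
    intro i hi
    have hGf : (fun σ => Gfun l c σ i) = fun σ : Fin ℓ → ℝ =>
        ((l i : ℝ) - ∑ j ∈ Finset.univ.filter (fun j => j < i), (c i j : ℝ) * Gfun l c σ j) *
          Jfun (σ i) := by
      funext σ; exact Gfun_spec l c σ i
    -- derivative of each previous G
    have hprev : ∀ j ∈ Finset.univ.filter (fun j => j < i), ∀ σ : Fin ℓ → ℝ,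
        HasFDerivAt (fun σ => (c i j : ℝ) * Gfun l c σ j)
          ((c i j : ℝ) • fderiv ℝ (fun σ => Gfun l c σ j) σ) σ := by
      intro j hj σ
      simp only [Finset.mem_filter] at hj
      exact ((ih j (by omega)).1 σ).hasFDerivAt.const_mul _
    have hS : ∀ σ : Fin ℓ → ℝ, HasFDerivAt
        (fun σ : Fin ℓ → ℝ => ∑ j ∈ Finset.univ.filter (fun j => j < i),
          (c i j : ℝ) * Gfun l c σ j)
        (∑ j ∈ Finset.univ.filter (fun j => j < i),
          (c i j : ℝ) • fderiv ℝ (fun σ => Gfun l c σ j) σ) σ :=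
      fun σ => HasFDerivAt.fun_sum (fun j hj => hprev j hj σ)
    have hMul : ∀ σ : Fin ℓ → ℝ, HasFDerivAt (fun σ => Gfun l c σ i)
        (((l i : ℝ) - ∑ j ∈ Finset.univ.filter (fun j => j < i), (c i j : ℝ) * Gfun l c σ j) •
            ((2 * Jfun (σ i) * (1 - Jfun (σ i))) •
              (ContinuousLinearMap.proj i : (Fin ℓ → ℝ) →L[ℝ] ℝ)) +
          Jfun (σ i) • (-(∑ j ∈ Finset.univ.filter (fun j => j < i),
            (c i j : ℝ) • fderiv ℝ (fun σ => Gfun l c σ j) σ))) σ := by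
      intro σ
      rw [hGf]
      exact ((hS σ).const_sub _).mul (hasFDerivAt_Jfun_eval i σ)
    refine ⟨fun σ => (hMul σ).differentiableAt, ?_, ?_⟩
    · intro σ k hk
      rw [(hMul σ).fderiv]
      simp only [ContinuousLinearMap.add_apply, ContinuousLinearMap.smul_apply,
        ContinuousLinearMap.neg_apply, ContinuousLinearMap.sum_apply,
        ContinuousLinearMap.proj_apply, smul_eq_mul]
      rw [Pi.single_eq_of_ne (ne_of_lt hk)]
      have hz : ∑ j ∈ Finset.univ.filter (fun j => j < i),
          (c i j : ℝ) * fderiv ℝ (fun σ => Gfun l c σ j) σ (Pi.single k 1) = 0 := by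
        apply Finset.sum_eq_zero
        intro j hj
        simp only [Finset.mem_filter] at hj
        rw [(ih j (by omega)).2.1 σ k (lt_trans hj.2 hk), mul_zero]
      rw [hz]
      ring
    · intro σ
      rw [(hMul σ).fderiv]
      simp only [ContinuousLinearMap.add_apply, ContinuousLinearMap.smul_apply,
        ContinuousLinearMap.neg_apply, ContinuousLinearMap.sum_apply,
        ContinuousLinearMap.proj_apply, smul_eq_mul]
      rw [Pi.single_eq_same]
      have hz : ∑ j ∈ Finset.univ.filter (fun j => j < i),
          (c i j : ℝ) * fderiv ℝ (fun σ => Gfun l c σ j) σ (Pi.single i 1) = 0 := by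
        apply Finset.sum_eq_zero
        intro j hj
        simp only [Finset.mem_filter] at hj
        rw [(ih j (by omega)).2.1 σ i hj.2, mul_zero]
      rw [hz]
      ring

def Gmap {ℓ : ℕ} (l : Fin ℓ → ℤ) (c : Fin ℓ → Fin ℓ → ℤ) (σ : Fin ℓ → ℝ) : Fin ℓ → ℝ :=
  fun i => Gfun l c σ i

def GDeriv {ℓ : ℕ} (l : Fin ℓ → ℤ) (c : Fin ℓ → Fin ℓ → ℤ) (σ : Fin ℓ → ℝ) :
    (Fin ℓ → ℝ) →L[ℝ] (Fin ℓ → ℝ) :=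
  ContinuousLinearMap.pi (fun i => fderiv ℝ (fun σ => Gfun l c σ i) σ)

lemma hasFDerivAt_Gmap {ℓ : ℕ} (l : Fin ℓ → ℤ) (c : Fin ℓ → Fin ℓ → ℤ) (σ : Fin ℓ → ℝ) :
    HasFDerivAt (Gmap l c) (GDeriv l c σ) σ :=
  hasFDerivAt_pi.2 (fun i => ((Gfun_fderiv l c i).1 σ).hasFDerivAt)

lemma single_eq_ite {ℓ : ℕ} (k : Fin ℓ) :
    (fun j' : Fin ℓ => if j' = k then (1:ℝ) else 0) = Pi.single k 1 := by
  funext j'; rw [Pi.single_apply]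

lemma GDeriv_matrix {ℓ : ℕ} (l : Fin ℓ → ℤ) (c : Fin ℓ → Fin ℓ → ℤ) (σ : Fin ℓ → ℝ)
    (i k : Fin ℓ) :
    LinearMap.toMatrix' ((GDeriv l c σ) : (Fin ℓ → ℝ) →ₗ[ℝ] (Fin ℓ → ℝ)) i k =
      fderiv ℝ (fun σ => Gfun l c σ i) σ (Pi.single k 1) := by
  rw [LinearMap.toMatrix'_apply]
  rfl

lemma GDeriv_det {ℓ : ℕ} (l : Fin ℓ → ℤ) (c : Fin ℓ → Fin ℓ → ℤ) (σ : Fin ℓ → ℝ) :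
    (GDeriv l c σ).det = ∏ i,
      ((l i : ℝ) - ∑ j ∈ Finset.univ.filter (fun j => j < i), (c i j : ℝ) * Gfun l c σ j) *
        (2 * Jfun (σ i) * (1 - Jfun (σ i))) := by
  have h : (GDeriv l c σ).det
      = LinearMap.det ((GDeriv l c σ) : (Fin ℓ → ℝ) →ₗ[ℝ] (Fin ℓ → ℝ)) := rfl
  rw [h, ← LinearMap.det_toMatrix']
  rw [Matrix.det_of_lowerTriangular _ (by
    intro i k hik
    rw [GDeriv_matrix]
    exact (Gfun_fderiv l c i).2.1 σ k hik)]
  apply Finset.prod_congr rfl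
  intro i _
  rw [GDeriv_matrix]
  exact (Gfun_fderiv l c i).2.2 σ

section withPos

variable {ℓ : ℕ} (l : Fin ℓ → ℤ) (c : Fin ℓ → Fin ℓ → ℤ)
  (hpos : ∀ τ : Fin ℓ → ℝ, ∀ j : Fin ℓ, 0 < (l j : ℝ) - Lfun l c j τ)

include hpos

lemma Ppos : ∀ (σ : Fin ℓ → ℝ) (i : Fin ℓ),
    0 < (l i : ℝ) - ∑ j ∈ Finset.univ.filter (fun j => j < i), (c i j : ℝ) * Gfun l c σ j := by
  intro σ i
  rw [← Lfun_Phi_eq]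
  exact hpos (Phi c σ) i

lemma GDeriv_det_pos : ∀ σ : Fin ℓ → ℝ, 0 < (GDeriv l c σ).det := by
  intro σ
  rw [GDeriv_det]
  apply Finset.prod_pos
  intro i _
  have h1 := Ppos l c hpos σ i
  have h2 := Jfun_pos (σ i)
  have h3 := Jfun_lt_one (σ i)
  exact mul_pos h1 (by nlinarith)

lemma Gmap_injective : Function.Injective (Gmap l c) := by
  intro σ σ' h
  funext i
  have hG : ∀ j, Gfun l c σ j = Gfun l c σ' j := fun j => congrFun h j
  have h1 := Gfun_spec l c σ i
  have h2 := Gfun_spec l c σ' i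
  rw [hG i] at h1
  have hP : ∑ j ∈ Finset.univ.filter (fun j => j < i), (c i j : ℝ) * Gfun l c σ j
      = ∑ j ∈ Finset.univ.filter (fun j => j < i), (c i j : ℝ) * Gfun l c σ' j :=
    Finset.sum_congr rfl (fun j _ => by rw [hG j])
  rw [hP] at h1
  have hJ : Jfun (σ i) = Jfun (σ' i) := by
    have hne := ne_of_gt (Ppos l c hpos σ' i)
    have := h1.symm.trans h2
    exact mul_left_cancel₀ hne this
  exact Jfun_injective hJ

end withPos

def JfunInv (y : ℝ) : ℝ := (1/2) * Real.log (y / (1 - y))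

lemma Jfun_JfunInv {y : ℝ} (h0 : 0 < y) (h1 : y < 1) : Jfun (JfunInv y) = y := by
  unfold Jfun JfunInv
  have hy1 : 0 < 1 - y := by linarith
  have hpos : 0 < y / (1 - y) := div_pos h0 hy1
  rw [show 2 * ((1/2) * Real.log (y / (1 - y))) = Real.log (y / (1 - y)) by ring]
  rw [Real.exp_log hpos]
  field_simp
  ring

lemma Gmap_range {ℓ : ℕ} (l : Fin ℓ → ℤ) (c : Fin ℓ → Fin ℓ → ℤ)
    (hpos : ∀ τ : Fin ℓ → ℝ, ∀ j : Fin ℓ, 0 < (l j : ℝ) - Lfun l c j τ) :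
    Set.range (Gmap l c) = {x : Fin ℓ → ℝ | ∀ i : Fin ℓ, 0 < x i ∧ x i < (l i : ℝ) -
      ∑ j ∈ Finset.univ.filter (fun j => j < i), (c i j : ℝ) * x j} := by
  ext x
  constructor
  · rintro ⟨σ, rfl⟩
    intro i
    have hP := Ppos l c hpos σ i
    have hspec := Gfun_spec l c σ i
    have h0 := Jfun_pos (σ i)
    have h1 := Jfun_lt_one (σ i)
    constructor
    · show 0 < Gfun l c σ i
      rw [hspec]; exact mul_pos hP h0
    · show Gfun l c σ i < (l i : ℝ) - ∑ j ∈ Finset.univ.filter (fun j => j < i),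
        (c i j : ℝ) * Gfun l c σ j
      rw [hspec]
      exact mul_lt_of_lt_one_right hP h1
  · intro hx
    set d : Fin ℓ → ℝ := fun i => (l i : ℝ) -
      ∑ j ∈ Finset.univ.filter (fun j => j < i), (c i j : ℝ) * x j with hd
    have hdpos : ∀ i, 0 < d i := fun i => lt_trans (hx i).1 (hx i).2
    refine ⟨fun i => JfunInv (x i / d i), ?_⟩
    have hJ : ∀ i : Fin ℓ, Jfun (JfunInv (x i / d i)) = x i / d i := fun i =>
      Jfun_JfunInv (div_pos (hx i).1 (hdpos i)) ((div_lt_one (hdpos i)).2 (hx i).2)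
    funext i
    show Gfun l c _ i = x i
    suffices h : ∀ n : ℕ, ∀ i : Fin ℓ, i.1 < n → Gfun l c (fun i => JfunInv (x i / d i)) i = x i
      from h ℓ i i.2
    intro n
    induction n with
    | zero => intro i hi; omega
    | succ n ih =>
      intro i hi
      rw [Gfun_spec]
      have hsum : ∑ j ∈ Finset.univ.filter (fun j => j < i),
          (c i j : ℝ) * Gfun l c (fun i => JfunInv (x i / d i)) j
          = ∑ j ∈ Finset.univ.filter (fun j => j < i), (c i j : ℝ) * x j := by
        apply Finset.sum_congr rfl
        intro j hj
        simp only [Finset.mem_filter] at hj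
        rw [ih j (by omega)]
      rw [hsum, hJ i]
      rw [show (l i : ℝ) - ∑ j ∈ Finset.univ.filter (fun j => j < i), (c i j : ℝ) * x j
        = d i from rfl]
      rw [mul_div_assoc', mul_comm, mul_div_assoc, div_self (ne_of_gt (hdpos i)), mul_one]

lemma hyperplane_null {ℓ : ℕ} (f : (Fin ℓ → ℝ) →ₗ[ℝ] ℝ) (u : Fin ℓ → ℝ) (hu : f u ≠ 0)
    (a : ℝ) : MeasureTheory.volume {x : Fin ℓ → ℝ | f x = a} = 0 := by
  set s : AffineSubspace ℝ (Fin ℓ → ℝ) :=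
    { carrier := {x | f x = a}
      smul_vsub_vadd_mem' := by
        intro t p1 p2 p3 h1 h2 h3
        simp only [Set.mem_setOf_eq] at h1 h2 h3 ⊢
        simp only [vsub_eq_sub, vadd_eq_add, map_add, map_sub, map_smul, h1, h2, h3,
          smul_eq_mul]
        ring } with hs
  have hset : {x : Fin ℓ → ℝ | f x = a} = (s : Set (Fin ℓ → ℝ)) := rfl
  rw [hset]
  apply MeasureTheory.Measure.addHaar_affineSubspace
  intro htop
  have hmem : ∀ y : Fin ℓ → ℝ, f y = a := by
    intro y
    have : y ∈ s := htop ▸ AffineSubspace.mem_top ℝ _ y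
    exact this
  have h0 : f 0 = a := hmem 0
  rw [map_zero] at h0
  have h1 : f u = a := hmem u
  rw [← h0] at h1
  exact hu h1

lemma pi_single_decomp {ℓ : ℕ} (v : Fin ℓ → ℝ) :
    v = ∑ m, v m • (Pi.single m 1 : Fin ℓ → ℝ) := by
  have : ∀ m : Fin ℓ, v m • (Pi.single m 1 : Fin ℓ → ℝ) = Pi.single m (v m) := by
    intro m
    rw [← Pi.single_smul, smul_eq_mul, mul_one]
  rw [Finset.sum_congr rfl (fun m _ => this m), Finset.univ_sum_single]

lemma clm_apply_sum {ℓ : ℕ} (T : (Fin ℓ → ℝ) →L[ℝ] ℝ) (v : Fin ℓ → ℝ) :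
    T v = ∑ m, v m * T (Pi.single m 1) := by
  conv_lhs => rw [pi_single_decomp v]
  rw [map_sum]
  exact Finset.sum_congr rfl (fun m _ => by rw [map_smul, smul_eq_mul])

lemma toMatrix'_single {ℓ : ℕ} (T : (Fin ℓ → ℝ) →L[ℝ] (Fin ℓ → ℝ)) (m k : Fin ℓ) :
    LinearMap.toMatrix' (T : (Fin ℓ → ℝ) →ₗ[ℝ] (Fin ℓ → ℝ)) m k = T (Pi.single k 1) m := by
  rw [LinearMap.toMatrix'_apply]
  rfl

lemma differentiable_PsiMap {ℓ : ℕ} (c : Fin ℓ → Fin ℓ → ℤ) : Differentiable ℝ (Psi c) :=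
  fun τ => (hasFDerivAt_pi.2
    (fun i => ((differentiable_Psi c i) τ).hasFDerivAt)).differentiableAt

lemma differentiable_Jact {ℓ : ℕ} (l : Fin ℓ → ℤ) (c : Fin ℓ → Fin ℓ → ℤ) (j : Fin ℓ) :
    Differentiable ℝ (Jact l c j) := by
  have h : Jact l c j = fun τ => Gfun l c (Psi c τ) j :=
    funext (fun τ => Jact_eq_Gfun_Psi l c τ j)
  rw [h]
  exact (Gfun_fderiv l c j).1.comp (differentiable_PsiMap c)

lemma det_statement_matrix {ℓ : ℕ} (l : Fin ℓ → ℤ) (c : Fin ℓ → Fin ℓ → ℤ) (σ : Fin ℓ → ℝ) :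
    (Matrix.of fun i j : Fin ℓ =>
      fderiv ℝ (Jact l c j) (Phi c σ) (Pi.single i 1)).det = (GDeriv l c σ).det := by
  classical
  set M : Matrix (Fin ℓ) (Fin ℓ) ℝ := Matrix.of fun i j : Fin ℓ =>
    fderiv ℝ (Jact l c j) (Phi c σ) (Pi.single i 1) with hM
  have hmat : LinearMap.toMatrix' ((GDeriv l c σ) : (Fin ℓ → ℝ) →ₗ[ℝ] (Fin ℓ → ℝ)) =
      M.transpose * LinearMap.toMatrix' ((PhiDeriv c σ) : (Fin ℓ → ℝ) →ₗ[ℝ] (Fin ℓ → ℝ)) := by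
    ext j k
    rw [Matrix.mul_apply, GDeriv_matrix]
    have hcomp : fderiv ℝ (fun σ => Gfun l c σ j) σ =
        (fderiv ℝ (Jact l c j) (Phi c σ)).comp (PhiDeriv c σ) := by
      have h1 : HasFDerivAt (fun σ => Jact l c j (Phi c σ))
          ((fderiv ℝ (Jact l c j) (Phi c σ)).comp (PhiDeriv c σ)) σ :=
        ((differentiable_Jact l c j) (Phi c σ)).hasFDerivAt.comp σ (hasFDerivAt_Phi c σ)
      have h2 : (fun σ => Jact l c j (Phi c σ)) = fun σ => Gfun l c σ j :=
        funext (fun σ => Jact_Phi_eq_Gfun l c σ j)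
      rw [h2] at h1
      exact h1.fderiv
    rw [hcomp]
    rw [ContinuousLinearMap.comp_apply]
    rw [clm_apply_sum]
    apply Finset.sum_congr rfl
    intro m _
    rw [Matrix.transpose_apply, toMatrix'_single]
    show (PhiDeriv c σ) (Pi.single k 1) m * fderiv ℝ (Jact l c j) (Phi c σ) (Pi.single m 1)
      = M m j * (PhiDeriv c σ) (Pi.single k 1) m
    rw [hM, Matrix.of_apply]
    ring
  have hdet1 : (GDeriv l c σ).det = (M.transpose * LinearMap.toMatrix'
      ((PhiDeriv c σ) : (Fin ℓ → ℝ) →ₗ[ℝ] (Fin ℓ → ℝ))).det := by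
    rw [← hmat, LinearMap.det_toMatrix']
  rw [hdet1, Matrix.det_mul, Matrix.det_transpose, LinearMap.det_toMatrix']
  show M.det = M.det * (PhiDeriv c σ).det
  rw [PhiDeriv_det, mul_one]

open MeasureTheory in
lemma polytope_ae {ℓ : ℕ} (l : Fin ℓ → ℤ) (c : Fin ℓ → Fin ℓ → ℤ) :
    ({x : Fin ℓ → ℝ | ∀ i : Fin ℓ, 0 < x i ∧ x i < (l i : ℝ) -
        ∑ j ∈ Finset.univ.filter (fun j => j < i), (c i j : ℝ) * x j} : Set (Fin ℓ → ℝ))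
      =ᵐ[volume] {x : Fin ℓ → ℝ | ∀ j : Fin ℓ, 0 ≤ x j ∧ x j ≤ (l j : ℝ) -
        ∑ i ∈ Finset.univ.filter (fun i => i < j), (c j i : ℝ) * x i} := by
  rw [MeasureTheory.ae_eq_set]
  constructor
  · have hempty : ({x : Fin ℓ → ℝ | ∀ i : Fin ℓ, 0 < x i ∧ x i < (l i : ℝ) -
        ∑ j ∈ Finset.univ.filter (fun j => j < i), (c i j : ℝ) * x j} \
        {x : Fin ℓ → ℝ | ∀ j : Fin ℓ, 0 ≤ x j ∧ x j ≤ (l j : ℝ) -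
        ∑ i ∈ Finset.univ.filter (fun i => i < j), (c j i : ℝ) * x i}) = ∅ := by
      apply Set.diff_eq_empty.2
      intro x hx j
      exact ⟨le_of_lt (hx j).1, le_of_lt (hx j).2⟩
    rw [hempty]
    exact measure_empty
  · set Lmap : Fin ℓ → ((Fin ℓ → ℝ) →ₗ[ℝ] ℝ) := fun i =>
      LinearMap.proj i + ∑ j ∈ Finset.univ.filter (fun j => j < i),
        (c i j : ℝ) • LinearMap.proj j with hLmap
    have hLapp : ∀ (i : Fin ℓ) (x : Fin ℓ → ℝ), Lmap i x = x i +
        ∑ j ∈ Finset.univ.filter (fun j => j < i), (c i j : ℝ) * x j := by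
      intro i x
      simp [hLmap, LinearMap.sum_apply, smul_eq_mul]
    apply measure_mono_null (t := ⋃ i : Fin ℓ,
      ({x : Fin ℓ → ℝ | (LinearMap.proj i : (Fin ℓ → ℝ) →ₗ[ℝ] ℝ) x = 0} ∪
       {x : Fin ℓ → ℝ | Lmap i x = (l i : ℝ)}))
    · intro x hx
      obtain ⟨hxc, hxo⟩ := hx
      simp only [Set.mem_setOf_eq, not_forall] at hxo
      obtain ⟨i, hi⟩ := hxo
      rcases not_and_or.1 hi with h1 | h2
      · refine Set.mem_iUnion.2 ⟨i, Or.inl ?_⟩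
        have := (hxc i).1
        simp only [Set.mem_setOf_eq, LinearMap.proj_apply]
        linarith [not_lt.1 h1]
      · refine Set.mem_iUnion.2 ⟨i, Or.inr ?_⟩
        have hle := (hxc i).2
        have := not_lt.1 h2
        simp only [Set.mem_setOf_eq]
        rw [hLapp]
        linarith
    · apply measure_iUnion_null
      intro i
      apply measure_union_null
      · apply hyperplane_null (LinearMap.proj i) (Pi.single i 1)
        simp
      · apply hyperplane_null (Lmap i) (Pi.single i 1)
        rw [hLapp]
        rw [Pi.single_eq_same]
        have : ∑ j ∈ Finset.univ.filter (fun j => j < i),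
            (c i j : ℝ) * (Pi.single i 1 : Fin ℓ → ℝ) j = 0 := by
          apply Finset.sum_eq_zero
          intro j hj
          simp only [Finset.mem_filter] at hj
          rw [Pi.single_eq_of_ne (ne_of_lt hj.2), mul_zero]
        rw [this]
        norm_num


open MeasureTheory

/-- Section 7: the classical partition function, written on the dense chart in
the action coordinates, equals the Laplace transform of the indicator function
of the moment polytope `Δ`:
`∫_{ℝ^ℓ} e^{−β⟨H,J(τ)⟩} det(∂J_j/∂τ_i) dτ = ∫_Δ e^{−β⟨H,x⟩} dx`. -/
theorem classical_partition_function_as_polytope_integral {ℓ : ℕ}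
    (l : Fin ℓ → ℤ) (c : Fin ℓ → Fin ℓ → ℤ)
    (hpos : ∀ τ : Fin ℓ → ℝ, ∀ j : Fin ℓ, 0 < (l j : ℝ) - Lfun l c j τ)
    (H : Fin ℓ → ℝ) (β : ℝ) (hβ : 0 < β) :
    (∫ τ : Fin ℓ → ℝ,
        Real.exp (-β * ∑ i, H i * Jact l c i τ) *
          (Matrix.of fun i j : Fin ℓ =>
            fderiv ℝ (Jact l c j) τ (Pi.single i 1)).det) =
      ∫ x in {x : Fin ℓ → ℝ | ∀ j : Fin ℓ, 0 ≤ x j ∧ x j ≤ (l j : ℝ) -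
          ∑ i ∈ Finset.univ.filter (fun i => i < j), (c j i : ℝ) * x i},
        Real.exp (-β * ∑ i, H i * x i) := by
    classical
  set g : (Fin ℓ → ℝ) → ℝ := fun τ => Real.exp (-β * ∑ i, H i * Jact l c i τ) *
      (Matrix.of fun i j : Fin ℓ => fderiv ℝ (Jact l c j) τ (Pi.single i 1)).det with hg
  have hstep1 : (∫ τ : Fin ℓ → ℝ, g τ) = ∫ σ : Fin ℓ → ℝ, g (Phi c σ) := by
    have h := integral_image_eq_integral_abs_det_fderiv_smul (μ := volume) MeasurableSet.univ
      (f' := fun σ => PhiDeriv c σ)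
      (fun x _ => (hasFDerivAt_Phi c x).hasFDerivWithinAt) ((Phi_injective c).injOn) g
    rw [Set.image_univ,
      (show Set.range (Phi c) = Set.univ from
        Set.range_eq_univ.2 (fun τ => ⟨Psi c τ, Phi_Psi c τ⟩)),
      Measure.restrict_univ] at h
    rw [h]
    apply integral_congr_ae
    filter_upwards with σ
    rw [PhiDeriv_det]
    norm_num
  have hpt : ∀ σ : Fin ℓ → ℝ, g (Phi c σ) =
      |(GDeriv l c σ).det| • Real.exp (-β * ∑ i, H i * Gmap l c σ i) := by
    intro σ
    rw [hg]
    simp only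
    rw [det_statement_matrix, abs_of_pos (GDeriv_det_pos l c hpos σ), smul_eq_mul]
    have hsum : ∑ i, H i * Jact l c i (Phi c σ) = ∑ i, H i * Gmap l c σ i :=
      Finset.sum_congr rfl (fun i _ => by rw [Jact_Phi_eq_Gfun]; rfl)
    rw [hsum]
    ring
  have hstep2 : (∫ σ : Fin ℓ → ℝ, g (Phi c σ)) =
      ∫ σ : Fin ℓ → ℝ, |(GDeriv l c σ).det| • Real.exp (-β * ∑ i, H i * Gmap l c σ i) :=
    integral_congr_ae (Filter.Eventually.of_forall hpt)
  have hstep3 : (∫ σ : Fin ℓ → ℝ, |(GDeriv l c σ).det| •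
        Real.exp (-β * ∑ i, H i * Gmap l c σ i)) =
      ∫ x in Set.range (Gmap l c), Real.exp (-β * ∑ i, H i * x i) := by
    have h := integral_image_eq_integral_abs_det_fderiv_smul (μ := volume) MeasurableSet.univ
      (f' := fun σ => GDeriv l c σ)
      (fun x _ => (hasFDerivAt_Gmap l c x).hasFDerivWithinAt)
      ((Gmap_injective l c hpos).injOn)
      (fun x : Fin ℓ → ℝ => Real.exp (-β * ∑ i, H i * x i))
    rw [Set.image_univ, Measure.restrict_univ] at h
    exact h.symm
  rw [hstep1, hstep2, hstep3, Gmap_range l c hpos]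
  exact MeasureTheory.setIntegral_congr_set (polytope_ae l c)
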